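/- Let Q be a quiver with property (P) and d a dimension vector with d ≠ (1,...,1) on its support. Assume Crawley-Boevey's bound: every top-type stratum of X(Q,d) = μ_{Q,d}^{-1}(0) lying over the deepest quotient stratum has dimension at most d·d − 1 + (1 − ⟨d,d⟩) + Σ_s m_s z_s − Σ_s m_s²(1 − ⟨dim N_{j_s}, dim N_{j_s}⟩). Then dim Z(Q,d) < 2(1 − ⟨d,d⟩) = dim M(Q,d), where Z(Q,d) is the fiber of the quotient map over the image of 0. -/

import Mathlib

open Finset

section

variable {V A : Type} [Fintype V] [Fintype A] [DecidableEq V]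
  (src tgt : A → V) (d : V → ℕ)

/-- The Euler form of a quiver. -/
def eulerForm (e e' : V → ℤ) : ℤ :=
  (∑ i : V, e i * e' i) - ∑ a : A, e (src a) * e' (tgt a)

/-- The coordinate vector `ε_i`. -/
def eps (i : V) : V → ℤ := fun j => if j = i then 1 else 0

/-- Source map of the doubled quiver `Q̄`. -/
abbrev dsrc : A ⊕ A → V := fun a => Sum.rec (fun a => src a) (fun a => tgt a) a

/-- Target map of the doubled quiver `Q̄`. -/
abbrev dtgt : A ⊕ A → V := fun a => Sum.rec (fun a => tgt a) (fun a => src a) a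

variable (K : Type) [Field K] [IsAlgClosed K] [CharZero K]

/-- The representation space `R(Q̄,d)` of the doubled quiver. -/
abbrev RepSpace : Type :=
  ∀ a : A ⊕ A, Matrix (Fin (d (dtgt src tgt a))) (Fin (d (dsrc src tgt a))) K

/-- Transport of a square matrix along an equality of sizes. -/
def castSq {n n' : ℕ} (h : n = n') (M : Matrix (Fin n) (Fin n) K) :
    Matrix (Fin n') (Fin n') K :=
  M.submatrix (Fin.cast h.symm) (Fin.cast h.symm)

/-- The moment map `μ_{Q,d} : R(Q̄,d) → gl(d)`, with `i`-th component
`∑_{t(a)=i} x_a y_a − ∑_{s(a)=i} y_a x_a`. -/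
def momentMap (w : RepSpace src tgt d K) (i : V) :
    Matrix (Fin (d i)) (Fin (d i)) K :=
  (∑ a : A, if h : tgt a = i then
      castSq K (congrArg d h)
        ((w (Sum.inl a) : Matrix (Fin (d (tgt a))) (Fin (d (src a))) K)
          * (w (Sum.inr a) : Matrix (Fin (d (src a))) (Fin (d (tgt a))) K)) else 0)
  - ∑ a : A, if h : src a = i then
      castSq K (congrArg d h)
        ((w (Sum.inr a) : Matrix (Fin (d (src a))) (Fin (d (tgt a))) K)
          * (w (Sum.inl a) : Matrix (Fin (d (tgt a))) (Fin (d (src a))) K)) else 0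

/-- `X(Q,d) = μ_{Q,d}^{-1}(0)`. -/
def momentFiber : Set (RepSpace src tgt d K) :=
  {w | ∀ i : V, momentMap src tgt d K w i = 0}

/-- The Zariski topology on the representation space, induced from the
Zariski topology (generated by complements of hypersurfaces) on the
coordinate space. -/
def repTop : TopologicalSpace (RepSpace src tgt d K) :=
  TopologicalSpace.induced
    (fun w (v : Σ a : A ⊕ A,
        Fin (d (dtgt src tgt a)) × Fin (d (dsrc src tgt a))) => w v.1 v.2.1 v.2.2)
    (TopologicalSpace.generateFrom
      {U | ∃ p : MvPolynomial
          (Σ a : A ⊕ A, Fin (d (dtgt src tgt a)) × Fin (d (dsrc src tgt a))) K,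
        U = {x | MvPolynomial.eval x p ≠ 0}})

/-- The `GL(d)`-orbit of a point of the representation space. -/
def glOrbit (w : RepSpace src tgt d K) : Set (RepSpace src tgt d K) :=
  {w' | ∃ g : ∀ i : V, GL (Fin (d i)) K, ∀ a : A ⊕ A,
    w' a = (g (dtgt src tgt a) : Matrix (Fin (d (dtgt src tgt a))) (Fin (d (dtgt src tgt a))) K) * w a
      * (((g (dsrc src tgt a))⁻¹ : GL (Fin (d (dsrc src tgt a))) K) : Matrix (Fin (d (dsrc src tgt a))) (Fin (d (dsrc src tgt a))) K)}

/-- The deepest stratum `Z(Q,d)`: the fiber of the quotient map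
`X(Q,d) → M(Q,d)` over the image of `0`, i.e. the points of `μ_{Q,d}^{-1}(0)`
whose `GL(d)`-orbit closure contains `0` (those with semisimplification of
type `τ_min`). -/
def deepStratum : Set (RepSpace src tgt d K) :=
  letI := repTop src tgt d K
  {w ∈ momentFiber src tgt d K | (0 : RepSpace src tgt d K) ∈ closure (glOrbit src tgt d K w)}

/-- The dimension of a subset of the representation space. -/
noncomputable def repDim (S : Set (RepSpace src tgt d K)) : WithBot ℕ∞ :=
  letI := repTop src tgt d K
  topologicalKrullDim S

/-- The quantity `z_s` of Crawley-Boevey's bound, for the semisimple type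
`τ_min` whose simples are the vertex simples: `z_s = 0` if
`⟨ε_{j_s}, ε_{j_s}⟩ = 1` or no `t < s` has `j_t = j_s`, and `z_s = m_t` for
the largest such `t` otherwise. -/
noncomputable def zCB {h : ℕ} (j : Fin h → V) (m : Fin h → ℕ) (s : Fin h) : ℤ :=
  if eulerForm src tgt (eps (j s)) (eps (j s)) = 1 then 0
  else if hP : (Finset.univ.filter (fun t : Fin h => t < s ∧ j t = j s)).Nonempty
    then (m ((Finset.univ.filter (fun t : Fin h => t < s ∧ j t = j s)).max' hP) : ℤ)
    else 0

/-- Crawley-Boevey's dimension bound (Proposition 2.7) for a top type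
`(j_s, m_s)` compatible with `τ_min`:
`d·d − 1 + (1 − ⟨d,d⟩) + ∑ m_s z_s − ∑ m_s² (1 − ⟨ε_{j_s}, ε_{j_s}⟩)`. -/
noncomputable def cbBound {h : ℕ} (j : Fin h → V) (m : Fin h → ℕ) : ℤ :=
  (∑ i : V, (d i : ℤ) ^ 2) - 1 + (1 - eulerForm src tgt (fun i => (d i : ℤ)) (fun i => (d i : ℤ)))
    + ∑ s : Fin h, (m s : ℤ) * zCB src tgt j m s
    - ∑ s : Fin h, (m s : ℤ) ^ 2 * (1 - eulerForm src tgt (eps (j s)) (eps (j s)))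


/-- Auxiliary: the Euler self-pairing of a vertex simple is `1 - #loops`. -/
lemma euler_eps_eq (i : V) :
    eulerForm src tgt (eps i) (eps i)
      = 1 - ((Finset.univ.filter (fun a : A => src a = i ∧ tgt a = i)).card : ℤ) := by
  unfold eulerForm eps
  have h1 : (∑ k : V, (if k = i then (1:ℤ) else 0) * (if k = i then 1 else 0)) = 1 := by
    simp
  have h2 : (∑ a : A, (if src a = i then (1:ℤ) else 0) * (if tgt a = i then 1 else 0))
      = ((Finset.univ.filter (fun a : A => src a = i ∧ tgt a = i)).card : ℤ) := by
    rw [Finset.card_filter]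
    push_cast
    refine Finset.sum_congr rfl fun a _ => ?_
    by_cases hs : src a = i <;> by_cases ht : tgt a = i <;> simp [hs, ht]
  rw [h1, h2]

/-- Auxiliary: `∑ m_s z_s ≤ ∑ m_s²`. -/
lemma zCB_mul_le {h : ℕ} (j : Fin h → V) (m : Fin h → ℕ) :
    ∑ s : Fin h, (m s : ℤ) * zCB src tgt j m s ≤ ∑ s : Fin h, ((m s : ℤ)) ^ 2 := by
  classical
  set prev : Fin h → Fin h := fun s =>
    if hp : (Finset.univ.filter (fun t : Fin h => t < s ∧ j t = j s)).Nonempty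
      then (Finset.univ.filter (fun t : Fin h => t < s ∧ j t = j s)).max' hp else s with hprev
  have hprevmem : ∀ s : Fin h,
      (Finset.univ.filter (fun t : Fin h => t < s ∧ j t = j s)).Nonempty →
      prev s < s ∧ j (prev s) = j s := by
    intro s hp
    have := (Finset.univ.filter (fun t : Fin h => t < s ∧ j t = j s)).max'_mem hp
    simp only [Finset.mem_filter] at this
    simp only [hprev, dif_pos hp]
    exact this.2
  -- z s is 0 or m (prev s)
  have hz : ∀ s : Fin h, zCB src tgt j m s = 0 ∨
      ((Finset.univ.filter (fun t : Fin h => t < s ∧ j t = j s)).Nonempty ∧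
        zCB src tgt j m s = (m (prev s) : ℤ)) := by
    intro s
    unfold zCB
    split
    · exact Or.inl rfl
    · split
      · rename_i hp
        exact Or.inr ⟨hp, by simp [hprev, dif_pos hp]⟩
      · exact Or.inl rfl
  have hz0 : ∀ s : Fin h, 0 ≤ zCB src tgt j m s := by
    intro s
    rcases hz s with h0 | ⟨_, he⟩
    · rw [h0]
    · rw [he]; positivity
  -- injectivity of prev on the set where z ≠ 0
  set F : Finset (Fin h) :=
    Finset.univ.filter (fun s : Fin h =>
      (Finset.univ.filter (fun t : Fin h => t < s ∧ j t = j s)).Nonempty ∧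
        zCB src tgt j m s ≠ 0) with hF
  have hinj : Set.InjOn prev F := by
    intro s1 hs1 s2 hs2 he
    by_contra hne12
    simp only [hF, Finset.coe_filter, Set.mem_setOf_eq] at hs1 hs2
    -- wlog s1 < s2
    rcases lt_or_gt_of_ne hne12 with hlt | hlt
    · have h1 := hprevmem s1 hs1.2.1
      have h2 := hprevmem s2 hs2.2.1
      have hjm : j s1 = j s2 := by rw [← h1.2, he, h2.2]
      have hmem : s1 ∈ Finset.univ.filter (fun t : Fin h => t < s2 ∧ j t = j s2) := by
        simp [hlt, hjm]
      have hpe : prev s2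
          = (Finset.univ.filter (fun t : Fin h => t < s2 ∧ j t = j s2)).max' hs2.2.1 := by
        simp only [hprev]; rw [dif_pos hs2.2.1]
      have hle : s1 ≤ prev s2 := by rw [hpe]; exact Finset.le_max' _ _ hmem
      rw [← he] at hle
      exact absurd (lt_of_le_of_lt hle h1.1) (lt_irrefl _)
    · have h1 := hprevmem s1 hs1.2.1
      have h2 := hprevmem s2 hs2.2.1
      have hjm : j s2 = j s1 := by rw [← h2.2, ← he, h1.2]
      have hmem : s2 ∈ Finset.univ.filter (fun t : Fin h => t < s1 ∧ j t = j s1) := by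
        simp [hlt, hjm]
      have hpe : prev s1
          = (Finset.univ.filter (fun t : Fin h => t < s1 ∧ j t = j s1)).max' hs1.2.1 := by
        simp only [hprev]; rw [dif_pos hs1.2.1]
      have hle : s2 ≤ prev s1 := by rw [hpe]; exact Finset.le_max' _ _ hmem
      rw [he] at hle
      exact absurd (lt_of_le_of_lt hle h2.1) (lt_irrefl _)
  -- ∑ z² ≤ ∑ m²
  have hsq : ∑ s : Fin h, (zCB src tgt j m s) ^ 2 ≤ ∑ s : Fin h, ((m s : ℤ)) ^ 2 := by
    have e1 : ∑ s : Fin h, (zCB src tgt j m s) ^ 2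
        = ∑ s ∈ F, (zCB src tgt j m s) ^ 2 := by
      refine (Finset.sum_subset (Finset.subset_univ F) ?_).symm
      intro s _ hsF
      simp only [hF, Finset.mem_filter, Finset.mem_univ, true_and, not_and, not_ne_iff] at hsF
      rcases hz s with h0 | ⟨hp, _⟩
      · rw [h0]; ring
      · rw [hsF hp]; ring
    have e2 : ∑ s ∈ F, (zCB src tgt j m s) ^ 2 = ∑ s ∈ F, ((m (prev s) : ℤ)) ^ 2 := by
      refine Finset.sum_congr rfl fun s hs => ?_
      simp only [hF, Finset.mem_filter] at hs
      rcases hz s with h0 | ⟨_, he⟩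
      · exact absurd h0 hs.2.2
      · rw [he]
    have e3 : ∑ s ∈ F, ((m (prev s) : ℤ)) ^ 2 = ∑ t ∈ F.image prev, ((m t : ℤ)) ^ 2 :=
      (Finset.sum_image (f := fun t => ((m t : ℤ)) ^ 2)
        (fun x hx y hy hxy => hinj hx hy hxy)).symm
    have e4 : ∑ t ∈ F.image prev, ((m t : ℤ)) ^ 2 ≤ ∑ t : Fin h, ((m t : ℤ)) ^ 2 := by
      refine Finset.sum_le_sum_of_subset_of_nonneg (Finset.subset_univ _) ?_
      intro t _ _; positivity
    rw [e1, e2, e3]; exact e4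
  have hstep : ∀ s : Fin h, 2 * ((m s : ℤ) * zCB src tgt j m s)
      ≤ ((m s : ℤ)) ^ 2 + (zCB src tgt j m s) ^ 2 := by
    intro s
    nlinarith [sq_nonneg ((m s : ℤ) - zCB src tgt j m s)]
  have := Finset.sum_le_sum (fun s (_ : s ∈ Finset.univ) => hstep s)
  rw [Finset.sum_add_distrib] at this
  rw [← Finset.mul_sum] at this
  linarith

/-- Auxiliary: the arrow term dominates twice the sum of squares. -/
lemma arrows_bound
    (hloops : ∀ i : V, 2 ≤ (Finset.univ.filter
        (fun a : A => src a = i ∧ tgt a = i)).card) :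
    2 * ∑ i : V, ((d i : ℤ)) ^ 2 ≤ ∑ a : A, (d (src a) : ℤ) * (d (tgt a) : ℤ) := by
  classical
  have step1 : ∑ i : V, 2 * ((d i : ℤ)) ^ 2
      ≤ ∑ i : V, ((Finset.univ.filter (fun a : A => src a = i ∧ tgt a = i)).card : ℤ)
          * ((d i : ℤ)) ^ 2 := by
    refine Finset.sum_le_sum fun i _ => ?_
    have h2 : (2 : ℤ) ≤ ((Finset.univ.filter (fun a : A => src a = i ∧ tgt a = i)).card : ℤ) := by
      exact_mod_cast hloops i
    nlinarith [sq_nonneg ((d i : ℤ))]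
  have step2 : ∑ i : V, ((Finset.univ.filter (fun a : A => src a = i ∧ tgt a = i)).card : ℤ)
          * ((d i : ℤ)) ^ 2
      = ∑ a : A, ∑ i : V, (if src a = i ∧ tgt a = i then ((d i : ℤ)) ^ 2 else 0) := by
    rw [Finset.sum_comm]
    refine Finset.sum_congr rfl fun i _ => ?_
    rw [← Finset.sum_filter, Finset.sum_const, nsmul_eq_mul]
  have step3 : ∀ a : A, ∑ i : V, (if src a = i ∧ tgt a = i then ((d i : ℤ)) ^ 2 else 0)
      ≤ (d (src a) : ℤ) * (d (tgt a) : ℤ) := by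
    intro a
    by_cases hts : tgt a = src a
    · have : ∑ i : V, (if src a = i ∧ tgt a = i then ((d i : ℤ)) ^ 2 else 0)
          = ((d (src a) : ℤ)) ^ 2 := by
        rw [Finset.sum_eq_single (src a)]
        · simp [hts]
        · intro i _ hi
          rw [if_neg]
          rintro ⟨h1, _⟩
          exact hi h1.symm
        · simp
      rw [this, hts]; ring_nf; exact le_refl _
    · have : ∑ i : V, (if src a = i ∧ tgt a = i then ((d i : ℤ)) ^ 2 else 0) = 0 := by
        refine Finset.sum_eq_zero fun i _ => ?_
        rw [if_neg]
        rintro ⟨h1, h2⟩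
        exact hts (h2.trans h1.symm)
      rw [this]; positivity
  calc 2 * ∑ i : V, ((d i : ℤ)) ^ 2 = ∑ i : V, 2 * ((d i : ℤ)) ^ 2 := by
        rw [Finset.mul_sum]
    _ ≤ _ := step1
    _ = _ := step2
    _ ≤ ∑ a : A, (d (src a) : ℤ) * (d (tgt a) : ℤ) := Finset.sum_le_sum fun a _ => step3 a

/-- **Lemma 3.4 (dimension bound for the deepest stratum).**
Let `(Q,d)` have property (P) with `d` not the all-ones vector on its support.
Assuming Crawley-Boevey's bound — the deepest stratum `Z(Q,d)` is covered by
top-type strata, so its dimension is bounded by the bound of some top type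
compatible with `τ_min` — one has `dim Z(Q,d) < 2 (1 − ⟨d,d⟩) = dim M(Q,d)`. -/
theorem stmt_12
    (hloops : ∀ i : V, 2 ≤ (Finset.univ.filter
        (fun a : A => src a = i ∧ tgt a = i)).card)
    (harrows : ∀ i j : V, i ≠ j →
        ∃ a : A, (src a = i ∧ tgt a = j) ∨ (src a = j ∧ tgt a = i))
    (hd : d ≠ 0)
    (hP : ∀ i j : V, i ≠ j →
        Finset.univ.filter (fun k => d k ≠ 0) = {i, j} →
        (Finset.univ.filter (fun a : A =>
            (src a = i ∧ tgt a = j) ∨ (src a = j ∧ tgt a = i))).card = 1 →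
        ¬(d i = 1 ∧ d j = 1))
    (hne : ∃ i, 2 ≤ d i)
    (dimZ : ℕ)
    (hdimZ : repDim src tgt d K (deepStratum src tgt d K) = (dimZ : WithBot ℕ∞))
    (hCB : ∃ (h : ℕ) (j : Fin h → V) (m : Fin h → ℕ),
        (∀ s, 1 ≤ m s)
        ∧ (∀ i : V, ∑ s ∈ Finset.univ.filter (fun s => j s = i), m s = d i)
        ∧ (dimZ : ℤ) ≤ cbBound src tgt d j m) :
    (dimZ : ℤ)
      < 2 * (1 - eulerForm src tgt (fun i => (d i : ℤ)) (fun i => (d i : ℤ))) := by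
  obtain ⟨h, j, m, hm1, hmd, hle⟩ := hCB
  set D : ℤ := ∑ i : V, ((d i : ℤ)) ^ 2 with hD
  set P : ℤ := ∑ a : A, (d (src a) : ℤ) * (d (tgt a) : ℤ) with hPdef
  have hq : eulerForm src tgt (fun i => (d i : ℤ)) (fun i => (d i : ℤ)) = D - P := by
    unfold eulerForm
    simp only [hD, hPdef, sq]
  set S : ℤ := ∑ s : Fin h, ((m s : ℤ)) ^ 2 with hS
  have hT : ∑ s : Fin h, (m s : ℤ) * zCB src tgt j m s ≤ S := zCB_mul_le src tgt j m
  have hW : 2 * S ≤ ∑ s : Fin h, ((m s : ℤ)) ^ 2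
      * (1 - eulerForm src tgt (eps (j s)) (eps (j s))) := by
    rw [hS, Finset.mul_sum]
    refine Finset.sum_le_sum fun s _ => ?_
    have he := euler_eps_eq src tgt (j s)
    have hl : (2 : ℤ) ≤ ((Finset.univ.filter
        (fun a : A => src a = j s ∧ tgt a = j s)).card : ℤ) := by
      exact_mod_cast hloops (j s)
    nlinarith [sq_nonneg ((m s : ℤ))]
  have hA : 2 * D ≤ P := arrows_bound src tgt d hloops
  have hS0 : 0 ≤ S := Finset.sum_nonneg fun s _ => by positivity
  rw [cbBound, hq] at hle
  rw [hq]
  linarith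


end
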